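/- arXiv:2007.11492 — 2 statements merged into one kernel-verified Lean document; each statement's English description precedes it below -/
import Mathlib

section
/- For every natural number ν, ∑_{k=0}^{2ν} (−1)^k · C(2ν+2, k+2) · 2^{−k} · C(2k, k) = (1/3) · (4ν+3) · (3/2)_ν / (1)_ν, with the sum taken over rational (or real) numbers. -/
open Finset

/-- Summand. -/
def Fq (n k : ℕ) : ℚ :=
  (-1 : ℚ) ^ k * ((n + 2).choose (k + 2)) * ((2 * k).choose k) / 2 ^ k

/-- Zeilberger certificate. -/
def Gq (n k : ℕ) : ℚ :=
  (-1 : ℚ) ^ (k + 1) * (n + 3) * k * ((2 * k).choose k) * ((n + 2).choose k)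
    / ((k + 1) * 2 ^ k)

/-- Partial sums. -/
def Tq (n : ℕ) : ℚ := ∑ k ∈ Finset.range (n + 1), Fq n k

lemma choose_rel (n k : ℕ) :
    n.choose (k + 1) * (k + 1) + n.choose k * k = n.choose k * n := by
  rcases le_or_gt k n with h | h
  · rw [Nat.choose_succ_right_eq, ← Nat.mul_add, Nat.sub_add_cancel h]
  · rw [Nat.choose_eq_zero_of_lt h, Nat.choose_eq_zero_of_lt (by omega)]
    simp

lemma choose_rel_q (n k : ℕ) :
    ((n.choose (k + 1) : ℚ)) * (k + 1) + (n.choose k : ℚ) * k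
      = (n.choose k : ℚ) * n := by
  exact_mod_cast congrArg (Nat.cast (R := ℚ)) (choose_rel n k)

lemma central_rel_q (k : ℕ) :
    ((k : ℚ) + 1) * ((2 * (k + 1)).choose (k + 1) : ℚ)
      = 2 * (2 * k + 1) * ((2 * k).choose k : ℚ) := by
  have h := Nat.succ_mul_centralBinom_succ k
  simp only [Nat.centralBinom] at h
  exact_mod_cast congrArg (Nat.cast (R := ℚ)) h

lemma cert (n k : ℕ) :
    (n + 2 : ℚ) * Fq (n + 2) k - 2 * Fq (n + 1) k - (n + 3) * Fq n k
      = Gq n (k + 1) - Gq n k := by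
  have hk1 : ((k : ℚ) + 1) ≠ 0 := by positivity
  have hk2 : ((k : ℚ) + 2) ≠ 0 := by positivity
  have h2k : (2 : ℚ) ^ k ≠ 0 := by positivity
  have e1 : (n + 2 + 2).choose (k + 2)
      = (n + 2 + 1).choose (k + 1) + (n + 2 + 1).choose (k + 2) :=
    Nat.choose_succ_succ' (n + 2 + 1) (k + 1)
  have e2 : (n + 2 + 1).choose (k + 1) = (n + 2).choose k + (n + 2).choose (k + 1) :=
    Nat.choose_succ_succ' (n + 2) k
  have e3 : (n + 2 + 1).choose (k + 2) = (n + 2).choose (k + 1) + (n + 2).choose (k + 2) :=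
    Nat.choose_succ_succ' (n + 2) (k + 1)
  have e4 : (n + 1 + 2).choose (k + 2) = (n + 2).choose (k + 1) + (n + 2).choose (k + 2) :=
    Nat.choose_succ_succ' (n + 2) (k + 1)
  have c1 : ((n + 2 + 2).choose (k + 2) : ℚ)
      = ((n + 2).choose k : ℚ) + 2 * ((n + 2).choose (k + 1) : ℚ)
        + ((n + 2).choose (k + 2) : ℚ) := by
    rw [e1, e2, e3]; push_cast; ring
  have c2 : ((n + 1 + 2).choose (k + 2) : ℚ)
      = ((n + 2).choose (k + 1) : ℚ) + ((n + 2).choose (k + 2) : ℚ) := by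
    rw [e4]; push_cast; ring
  have h1 : ((n + 2).choose (k + 1) : ℚ) * (k + 1) + ((n + 2).choose k : ℚ) * k
      = ((n + 2).choose k : ℚ) * (n + 2) := by
    have := choose_rel_q (n + 2) k
    push_cast at this
    linear_combination this
  have h2 : ((n + 2).choose (k + 2) : ℚ) * (k + 2)
        + ((n + 2).choose (k + 1) : ℚ) * (k + 1)
      = ((n + 2).choose (k + 1) : ℚ) * (n + 2) := by
    have := choose_rel_q (n + 2) (k + 1)
    push_cast at this
    linear_combination this
  have hC : ((n + 2).choose (k + 2) : ℚ)
      = (((n + 2).choose (k + 1) : ℚ) * (n + 2)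
          - ((n + 2).choose (k + 1) : ℚ) * (k + 1)) / (k + 2) := by
    field_simp
    linear_combination h2
  have hM3 : ((2 * (k + 1)).choose (k + 1) : ℚ)
      = 2 * (2 * k + 1) * ((2 * k).choose k : ℚ) / (k + 1) := by
    field_simp
    linear_combination central_rel_q k
  have hB : ((n + 2).choose (k + 1) : ℚ)
      = (((n + 2).choose k : ℚ) * (n + 2) - ((n + 2).choose k : ℚ) * k) / (k + 1) := by
    field_simp
    linear_combination h1
  simp only [Fq, Gq]
  push_cast
  rw [c1, c2, hC, hM3, hB]
  field_simp
  ring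

lemma Fq_eq_zero {n k : ℕ} (h : n < k) : Fq n k = 0 := by
  simp [Fq, Nat.choose_eq_zero_of_lt (by omega : n + 2 < k + 2)]

lemma Tq_ext (n N : ℕ) (h : n + 1 ≤ N) :
    Tq n = ∑ k ∈ Finset.range N, Fq n k := by
  rw [Tq]
  apply Finset.sum_subset (Finset.range_subset_range.2 h)
  intro x _ hx
  simp only [Finset.mem_range, not_lt] at hx
  exact Fq_eq_zero (by omega)

lemma Gq_zero (n : ℕ) : Gq n 0 = 0 := by simp [Gq]

lemma Gq_zero_big (n K : ℕ) (h : n + 2 < K) : Gq n K = 0 := by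
  simp [Gq, Nat.choose_eq_zero_of_lt h]

lemma Tq_rec (n : ℕ) :
    (n + 2 : ℚ) * Tq (n + 2) = 2 * Tq (n + 1) + (n + 3) * Tq n := by
  have key : ∑ k ∈ Finset.range (n + 5),
      ((n + 2 : ℚ) * Fq (n + 2) k - 2 * Fq (n + 1) k - (n + 3) * Fq n k)
      = Gq n (n + 5) - Gq n 0 := by
    rw [← Finset.sum_range_sub (fun k => Gq n k) (n + 5)]
    exact Finset.sum_congr rfl (fun k _ => cert n k)
  rw [Gq_zero, Gq_zero_big n (n + 5) (by omega), sub_zero] at key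
  rw [Tq_ext n (n + 5) (by omega), Tq_ext (n + 1) (n + 5) (by omega),
    Tq_ext (n + 2) (n + 5) (by omega), Finset.mul_sum, Finset.mul_sum, Finset.mul_sum,
    ← sub_eq_zero, ← Finset.sum_add_distrib, ← Finset.sum_sub_distrib, ← key]
  exact Finset.sum_congr rfl fun k _ => by ring

lemma main_ind (ν : ℕ) :
    Tq (2 * ν) = (1 / 3) * (4 * ν + 3) * (ascPochhammer ℚ ν).eval (3 / 2)
        / (ascPochhammer ℚ ν).eval 1
    ∧ Tq (2 * ν + 1) = (2 / 3) * (2 * ν + 3) * (ascPochhammer ℚ ν).eval (3 / 2)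
        / (ascPochhammer ℚ ν).eval 1 := by
  induction ν with
  | zero =>
    constructor <;>
      norm_num [Tq, Fq, Finset.sum_range_succ]
  | succ m ih =>
    obtain ⟨hE, hO⟩ := ih
    set P : ℚ := (ascPochhammer ℚ m).eval (3 / 2) with hP
    set Q : ℚ := (ascPochhammer ℚ m).eval 1 with hQ
    have hQpos : 0 < Q := ascPochhammer_pos m 1 one_pos
    have hQne : Q ≠ 0 := ne_of_gt hQpos
    have hPsucc : (ascPochhammer ℚ (m + 1)).eval (3 / 2) = P * (3 / 2 + m) :=
      ascPochhammer_succ_eval m (3 / 2 : ℚ)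
    have hQsucc : (ascPochhammer ℚ (m + 1)).eval 1 = Q * (1 + m) :=
      ascPochhammer_succ_eval m (1 : ℚ)
    have hm1 : ((m : ℚ) + 1) ≠ 0 := by positivity
    have h2ne : ((2 : ℚ) * m + 2) ≠ 0 := by positivity
    have h3ne : ((2 : ℚ) * m + 3) ≠ 0 := by positivity
    have hrec1 : ((2 * m : ℕ) + 2 : ℚ) * Tq (2 * m + 2)
        = 2 * Tq (2 * m + 1) + ((2 * m : ℕ) + 3) * Tq (2 * m) := Tq_rec (2 * m)
    have hrec2 : ((2 * m + 1 : ℕ) + 2 : ℚ) * Tq (2 * m + 1 + 2)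
        = 2 * Tq (2 * m + 1 + 1) + ((2 * m + 1 : ℕ) + 3) * Tq (2 * m + 1) :=
      Tq_rec (2 * m + 1)
    push_cast at hrec1 hrec2
    have hE' : Tq (2 * m + 2)
        = (2 * Tq (2 * m + 1) + (2 * (m : ℚ) + 3) * Tq (2 * m)) / (2 * m + 2) := by
      rw [eq_div_iff h2ne]
      linear_combination hrec1
    rw [hE, hO] at hE'
    have hO' : Tq (2 * m + 3)
        = (2 * Tq (2 * m + 2) + (2 * (m : ℚ) + 4) * Tq (2 * m + 1)) / (2 * m + 3) := by
      rw [eq_div_iff h3ne]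
      have : (2 * m + 1 + 2 : ℕ) = 2 * m + 3 := by omega
      rw [this] at hrec2
      linear_combination hrec2
    rw [hE', hO] at hO'
    constructor
    · rw [show 2 * (m + 1) = 2 * m + 2 from by ring, hE', hPsucc, hQsucc]
      push_cast
      field_simp
      ring
    · rw [show 2 * (m + 1) + 1 = 2 * m + 3 from by ring, hO', hPsucc, hQsucc]
      push_cast
      field_simp
      ring

/-- Identity (3.5): the even case of Theorem 2.1 with `i = 2`. -/
theorem theorem_2_1_even_i_two (ν : ℕ) :
    ∑ k ∈ Finset.range (2 * ν + 1),
      (-1 : ℚ) ^ k * ((2 * ν + 2).choose (k + 2)) * ((2 * k).choose k) / 2 ^ k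
      = (1 / 3) * (4 * ν + 3) * (ascPochhammer ℚ ν).eval (3 / 2)
          / (ascPochhammer ℚ ν).eval 1 := by
  have := (main_ind ν).1
  rw [Tq] at this
  convert this using 1
  rfl
end

section
/- For every natural number ν, ∑_{k=0}^{2ν+1} (−1)^k · C(2ν+4, k+3) · 2^{−k} · C(2k, k) = (1/5) · (8ν+15) · (5/2)_ν / (1)_ν, with the sum taken over rational (or real) numbers. -/
open Finset

/-- The summand. -/
private def u (n k : ℕ) : ℚ := (-1 : ℚ) ^ k * (n.choose k) * ((2 * k).choose k) / 2 ^ k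

/-- The general sum `S_i(n)`. -/
private def Sg (i n : ℕ) : ℚ :=
    ∑ k ∈ range (n + 1), (-1 : ℚ) ^ k * (n.choose (k + i)) * ((2 * k).choose k) / 2 ^ k

/-- Normalized central binomial coefficient. -/
private def c (m : ℕ) : ℚ := ((2 * m).choose m : ℚ) / 4 ^ m

private lemma centralBinom_cast (m : ℕ) :
    ((2 * (m + 1)).choose (m + 1) : ℚ) * (m + 1) = 2 * (2 * m + 1) * ((2 * m).choose m) := by
  have h := Nat.succ_mul_centralBinom_succ m
  unfold Nat.centralBinom at h
  have h2 : ((m + 1) * (2 * (m + 1)).choose (m + 1) : ℚ)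
      = ((2 * (2 * m + 1) * (2 * m).choose m : ℕ) : ℚ) := by
    exact_mod_cast congrArg (Nat.cast (R := ℚ)) h
  push_cast at h2
  linarith

/-- `c` recurrence, multiplied form. -/
private lemma c_succ (m : ℕ) : c (m + 1) * (2 * m + 2) = (2 * m + 1) * c m := by
  have h := centralBinom_cast m
  have hm : ((m : ℚ) + 1) ≠ 0 := by positivity
  unfold c
  rw [pow_succ]
  field_simp
  linear_combination 2 * h

private lemma choose_right_cast (n k : ℕ) :
    (n.choose (k + 1) : ℚ) * (k + 1) = (n.choose k) * ((n : ℚ) - k) := by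
  by_cases h : k ≤ n
  · have h1 := Nat.choose_succ_right_eq n k
    have h2 : ((n.choose (k + 1) * (k + 1) : ℕ) : ℚ) = ((n.choose k * (n - k) : ℕ) : ℚ) := by
      exact_mod_cast congrArg (Nat.cast (R := ℚ)) h1
    push_cast [Nat.cast_sub h] at h2
    linarith
  · rw [Nat.choose_eq_zero_of_lt (by omega), Nat.choose_eq_zero_of_lt (by omega)]
    simp

private lemma choose_up_cast (n k : ℕ) :
    (n.choose k : ℚ) * ((n : ℚ) + 1) = ((n + 1).choose k) * ((n : ℚ) + 1 - k) := by
  by_cases h : k ≤ n + 1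
  · have h1 := Nat.choose_mul_succ_eq n k
    have h2 : ((n.choose k * (n + 1) : ℕ) : ℚ) = (((n + 1).choose k * (n + 1 - k) : ℕ) : ℚ) := by
      exact_mod_cast congrArg (Nat.cast (R := ℚ)) h1
    push_cast [Nat.cast_sub h] at h2
    linarith
  · rw [Nat.choose_eq_zero_of_lt (by omega), Nat.choose_eq_zero_of_lt (by omega)]
    simp

private lemma choose_up2_cast (n k : ℕ) :
    ((n : ℚ) + 1) * ((n : ℚ) + 2) * (n.choose k) =
      ((n + 2).choose k) * ((n : ℚ) + 2 - k) * ((n : ℚ) + 1 - k) := by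
  have h1 := choose_up_cast n k
  have h2 := choose_up_cast (n + 1) k
  push_cast at h2
  nlinarith [h1, h2]

private lemma key' (n k : ℕ) :
    2 * ((n : ℚ) + 2) ^ 2 * ((n + 2).choose k) * ((2 * k).choose k)
      - 2 * ((n : ℚ) + 1) * ((n : ℚ) + 2) * (n.choose k) * ((2 * k).choose k)
      = 2 * (k : ℚ) ^ 2 * ((n + 2).choose k) * ((2 * k).choose k)
        + ((k : ℚ) + 1) ^ 2 * ((n + 2).choose (k + 1)) * ((2 * (k + 1)).choose (k + 1)) := by
  have hA := choose_right_cast (n + 2) k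
  have hB := centralBinom_cast k
  have hC := choose_up2_cast n k
  push_cast at hA
  linear_combination (-((k : ℚ) + 1) * ((2 * (k + 1)).choose (k + 1) : ℚ)) * hA
    + (-(((n : ℚ) + 2 - k)) * (((n + 2).choose k : ℚ))) * hB + (-2 * (((2 * k).choose k : ℚ))) * hC

/-- Per-`k` Gosper certificate identity for the `S₀` recurrence. -/
private lemma key (n k : ℕ) :
    ((n : ℚ) + 2) ^ 2 * u (n + 2) k - ((n : ℚ) + 1) * ((n : ℚ) + 2) * u n k
      = (k : ℚ) ^ 2 * u (n + 2) k - ((k : ℚ) + 1) ^ 2 * u (n + 2) (k + 1) := by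
  have h := key' n k
  unfold u
  rw [pow_succ 2 k, pow_succ (-1 : ℚ) k]
  have h2 : ((2 : ℚ)) ^ k ≠ 0 := by positivity
  field_simp
  linear_combination h

private lemma Sg0_eq (n : ℕ) : Sg 0 n = ∑ k ∈ range (n + 1), u n k := rfl

private lemma u_zero {n k : ℕ} (h : n < k) : u n k = 0 := by
  unfold u
  rw [Nat.choose_eq_zero_of_lt h]
  simp

/-- The recurrence `(n+2) S₀(n+2) = (n+1) S₀(n)`. -/
private lemma S0_rec (n : ℕ) :
    Sg 0 (n + 2) * ((n : ℚ) + 2) = Sg 0 n * ((n : ℚ) + 1) := by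
  have hsum : ∑ k ∈ range (n + 3),
      (((n : ℚ) + 2) ^ 2 * u (n + 2) k - ((n : ℚ) + 1) * ((n : ℚ) + 2) * u n k)
      = ∑ k ∈ range (n + 3),
        ((fun j : ℕ => (j : ℚ) ^ 2 * u (n + 2) j) k
          - (fun j : ℕ => (j : ℚ) ^ 2 * u (n + 2) j) (k + 1)) := by
    refine Finset.sum_congr rfl fun k _ => ?_
    show _ = (k : ℚ) ^ 2 * u (n + 2) k - ((k + 1 : ℕ) : ℚ) ^ 2 * u (n + 2) (k + 1)
    push_cast
    exact key n k
  rw [Finset.sum_range_sub' (fun j : ℕ => (j : ℚ) ^ 2 * u (n + 2) j) (n + 3)] at hsum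
  have hz : (fun j : ℕ => (j : ℚ) ^ 2 * u (n + 2) j) 0
      - (fun j : ℕ => (j : ℚ) ^ 2 * u (n + 2) j) (n + 3) = 0 := by
    show (((0 : ℕ) : ℚ)) ^ 2 * u (n + 2) 0 - (((n + 3 : ℕ) : ℚ)) ^ 2 * u (n + 2) (n + 3) = 0
    rw [u_zero (show n + 2 < n + 3 by omega)]
    norm_num
  rw [hz, Finset.sum_sub_distrib, ← Finset.mul_sum, ← Finset.mul_sum] at hsum
  have e1 : ∑ k ∈ range (n + 3), u (n + 2) k = Sg 0 (n + 2) := (Sg0_eq (n + 2)).symm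
  have e2 : ∑ k ∈ range (n + 3), u n k = Sg 0 n := by
    rw [show n + 3 = (n + 1) + 1 + 1 by omega, Finset.sum_range_succ, Finset.sum_range_succ,
      u_zero (show n < n + 1 by omega), u_zero (show n < n + 2 by omega), Sg0_eq]
    ring
  rw [e1, e2] at hsum
  have hn2 : ((n : ℚ) + 2) ≠ 0 := by positivity
  apply mul_left_cancel₀ hn2
  linear_combination hsum

/-- Pascal recurrence for the family. -/
private lemma Sg_rec (i n : ℕ) : Sg (i + 1) (n + 1) = Sg (i + 1) n + Sg i n := by
  unfold Sg
  rw [Finset.sum_range_succ, Nat.choose_eq_zero_of_lt (show n + 1 < n + 1 + (i + 1) by omega)]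
  simp only [Nat.cast_zero, mul_zero, zero_mul, zero_div, add_zero]
  rw [← Finset.sum_add_distrib]
  refine Finset.sum_congr rfl fun k _ => ?_
  have hp : (n + 1).choose (k + (i + 1)) = n.choose (k + i) + n.choose (k + i + 1) := by
    rw [show k + (i + 1) = (k + i) + 1 by omega]
    exact Nat.choose_succ_succ n (k + i)
  rw [hp]
  push_cast
  ring

private lemma sg_base :
    Sg 0 0 = 1 ∧ Sg 0 1 = 0 ∧ Sg 1 0 = 0 ∧ Sg 1 1 = 1 ∧ Sg 2 0 = 0 ∧ Sg 2 1 = 0 ∧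
      Sg 3 0 = 0 ∧ Sg 3 1 = 0 := by
  norm_num [Sg, Finset.sum_range_succ, show Nat.choose 1 3 = 0 from rfl,
    show Nat.choose 1 4 = 0 from rfl, show Nat.choose 0 2 = 0 from rfl,
    show Nat.choose 0 3 = 0 from rfl, show Nat.choose 1 2 = 0 from rfl,
    show Nat.choose 0 1 = 0 from rfl]

private lemma c_zero : c 0 = 1 := by norm_num [c]

/-- All closed forms, proven by simultaneous induction. -/
private lemma closed (m : ℕ) :
    Sg 0 (2 * m) = c m ∧ Sg 0 (2 * m + 1) = 0 ∧
    Sg 1 (2 * m) = 2 * m * c m ∧ Sg 1 (2 * m + 1) = (2 * m + 1) * c m ∧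
    Sg 2 (2 * m) = 2 * m * (4 * m - 1) / 3 * c m ∧
    Sg 2 (2 * m + 1) = 4 * m * (2 * m + 1) / 3 * c m ∧
    Sg 3 (2 * m) = 4 * m * ((m : ℚ) - 1) * (8 * m - 1) / 15 * c m ∧
    Sg 3 (2 * m + 1) = 2 * m * (2 * m + 1) * (8 * m - 3) / 15 * c m := by
  induction m with
  | zero =>
    obtain ⟨h1, h2, h3, h4, h5, h6, h7, h8⟩ := sg_base
    norm_num [h1, h2, h3, h4, h5, h6, h7, h8, c_zero]
  | succ m ih =>
    obtain ⟨i0e, i0o, i1e, i1o, i2e, i2o, i3e, i3o⟩ := ih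
    have hm2 : (2 * (m + 1) : ℕ) = (2 * m + 1) + 1 := by omega
    have hcs := c_succ m
    have hne : (2 * (m : ℚ) + 2) ≠ 0 := by positivity
    -- S0 even
    have h0e : Sg 0 (2 * (m + 1)) = c (m + 1) := by
      have hr := S0_rec (2 * m)
      push_cast at hr
      rw [show (2 * m + 2 : ℕ) = 2 * (m + 1) by omega, i0e] at hr
      apply mul_right_cancel₀ hne
      rw [hcs]
      linarith
    -- S0 odd
    have h0o : Sg 0 (2 * (m + 1) + 1) = 0 := by
      have hr := S0_rec (2 * m + 1)
      push_cast at hr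
      rw [show (2 * m + 1 + 2 : ℕ) = 2 * (m + 1) + 1 by omega, i0o] at hr
      have h3 : (2 * (m : ℚ) + 1 + 2) ≠ 0 := by positivity
      have := mul_eq_zero.mp (by linarith : Sg 0 (2 * (m + 1) + 1) * (2 * (m : ℚ) + 1 + 2) = 0)
      tauto
    -- values at 2m+2 via Pascal
    have r1 : Sg 1 (2 * (m + 1)) = Sg 1 (2 * m + 1) + Sg 0 (2 * m + 1) := by
      rw [hm2]; exact Sg_rec 0 (2 * m + 1)
    have r2 : Sg 2 (2 * (m + 1)) = Sg 2 (2 * m + 1) + Sg 1 (2 * m + 1) := by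
      rw [hm2]; exact Sg_rec 1 (2 * m + 1)
    have r3 : Sg 3 (2 * (m + 1)) = Sg 3 (2 * m + 1) + Sg 2 (2 * m + 1) := by
      rw [hm2]; exact Sg_rec 2 (2 * m + 1)
    have r1' : Sg 1 (2 * (m + 1) + 1) = Sg 1 (2 * (m + 1)) + Sg 0 (2 * (m + 1)) :=
      Sg_rec 0 (2 * (m + 1))
    have r2' : Sg 2 (2 * (m + 1) + 1) = Sg 2 (2 * (m + 1)) + Sg 1 (2 * (m + 1)) :=
      Sg_rec 1 (2 * (m + 1))
    have r3' : Sg 3 (2 * (m + 1) + 1) = Sg 3 (2 * (m + 1)) + Sg 2 (2 * (m + 1)) :=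
      Sg_rec 2 (2 * (m + 1))
    have h1e : Sg 1 (2 * (m + 1)) = 2 * ((m : ℚ) + 1) * c (m + 1) := by
      rw [r1, i1o, i0o]
      apply mul_right_cancel₀ hne
      linear_combination (-2 * ((m : ℚ) + 1)) * hcs
    have h2e : Sg 2 (2 * (m + 1)) = 2 * ((m : ℚ) + 1) * (4 * ((m : ℚ) + 1) - 1) / 3 * c (m + 1) := by
      rw [r2, i2o, i1o]
      apply mul_right_cancel₀ hne
      linear_combination (-2 * ((m : ℚ) + 1) * (4 * ((m : ℚ) + 1) - 1) / 3) * hcs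
    have h3e : Sg 3 (2 * (m + 1)) =
        4 * ((m : ℚ) + 1) * (((m : ℚ) + 1) - 1) * (8 * ((m : ℚ) + 1) - 1) / 15 * c (m + 1) := by
      rw [r3, i3o, i2o]
      apply mul_right_cancel₀ hne
      linear_combination (-4 * ((m : ℚ) + 1) * (((m : ℚ) + 1) - 1) * (8 * ((m : ℚ) + 1) - 1) / 15) * hcs
    have h1o : Sg 1 (2 * (m + 1) + 1) = (2 * ((m : ℚ) + 1) + 1) * c (m + 1) := by
      rw [r1', h1e, h0e]; ring
    have h2o : Sg 2 (2 * (m + 1) + 1) =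
        4 * ((m : ℚ) + 1) * (2 * ((m : ℚ) + 1) + 1) / 3 * c (m + 1) := by
      rw [r2', h2e, h1e]; ring
    have h3o : Sg 3 (2 * (m + 1) + 1) =
        2 * ((m : ℚ) + 1) * (2 * ((m : ℚ) + 1) + 1) * (8 * ((m : ℚ) + 1) - 3) / 15 * c (m + 1) := by
      rw [r3', h3e, h2e]; ring
    refine ⟨h0e, h0o, ?_, ?_, ?_, ?_, ?_, ?_⟩ <;> push_cast <;>
      [rw [h1e]; rw [h1o]; rw [h2e]; rw [h2o]; rw [h3e]; rw [h3o]] <;> try (push_cast; ring)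

private lemma eval_one_pos (ν : ℕ) : 0 < (ascPochhammer ℚ ν).eval 1 := by
  induction ν with
  | zero => simp [ascPochhammer]
  | succ n ih =>
    rw [ascPochhammer_succ_eval]
    have : (0 : ℚ) < 1 + n := by positivity
    positivity

/-- Bridge between `c (ν+2)` and the Pochhammer ratio. -/
private lemma bridge (ν : ℕ) :
    4 * ((ν : ℚ) + 1) * ((ν : ℚ) + 2) * c (ν + 2) * (ascPochhammer ℚ ν).eval 1
      = 3 * (ascPochhammer ℚ ν).eval (5 / 2) := by
  induction ν with
  | zero => norm_num [ascPochhammer, c, show Nat.choose 4 2 = 6 from rfl]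
  | succ n ih =>
    have hcs := c_succ (n + 2)
    rw [show (n + 1 + 2 : ℕ) = (n + 2) + 1 by omega]
    rw [ascPochhammer_succ_eval, ascPochhammer_succ_eval]
    have hne : (2 * ((n : ℚ) + 2) + 2) ≠ 0 := by positivity
    apply mul_left_cancel₀ hne
    push_cast
    push_cast at hcs
    linear_combination (4 * ((n : ℚ) + 2) * ((n : ℚ) + 3) * (ascPochhammer ℚ n).eval 1
      * (1 + (n : ℚ))) * hcs + (((n : ℚ) + 3) * (2 * (n : ℚ) + 5)) * ih

/-- Identity (3.8): the odd case of Theorem 2.1 with `i = 3`. -/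
theorem theorem_2_1_odd_i_three (ν : ℕ) :
    ∑ k ∈ Finset.range (2 * ν + 2),
      (-1 : ℚ) ^ k * ((2 * ν + 4).choose (k + 3)) * ((2 * k).choose k) / 2 ^ k
      = (1 / 5) * (8 * ν + 15) * (ascPochhammer ℚ ν).eval (5 / 2)
          / (ascPochhammer ℚ ν).eval 1 := by
  have hL : Sg 3 (2 * ν + 4) = ∑ k ∈ Finset.range (2 * ν + 2),
      (-1 : ℚ) ^ k * ((2 * ν + 4).choose (k + 3)) * ((2 * k).choose k) / 2 ^ k := by
    unfold Sg
    refine (Finset.sum_subset (Finset.range_subset_range.mpr (by omega)) fun x _ hx => ?_).symm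
    rw [Finset.mem_range, not_lt] at hx
    rw [Nat.choose_eq_zero_of_lt (show 2 * ν + 4 < x + 3 by omega)]
    simp
  rw [← hL, show (2 * ν + 4 : ℕ) = 2 * (ν + 2) by omega]
  have h3 := (closed (ν + 2)).2.2.2.2.2.2.1
  rw [h3]
  have hb := bridge ν
  have hne : (ascPochhammer ℚ ν).eval 1 ≠ 0 := ne_of_gt (eval_one_pos ν)
  rw [eq_div_iff hne]
  push_cast
  linear_combination ((8 * (ν : ℚ) + 15) / 15) * hb
end
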